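/- The discrete complementary convolution kernels are positive: p^{(n)}_{n−k} > 0 for all 1 ≤ k ≤ n ≤ N. -/

import Mathlib

open scoped BigOperators

/-- ω_β(t) = t^{β-1}/Γ(β) -/
noncomputable def omegaK (β t : ℝ) : ℝ := t ^ (β - 1) / Real.Gamma β

/-- variable-step L1 kernel: `aK α t n k = a^{(n)}_{n-k}` for `1 ≤ k ≤ n`. -/
noncomputable def aK (α : ℝ) (t : ℕ → ℝ) (n k : ℕ) : ℝ :=
  (1 / (t k - t (k - 1))) * ∫ s in (t (k - 1))..(t k), omegaK (1 - α) (t n - s)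

/-- DCC kernel: `pK α t n m = p^{(n)}_m`, i.e. `p^{(n)}_{n-k} = pK α t n (n-k)`;
`p^{(n)}_0 = 1/a^{(n)}_0` and
`p^{(n)}_{n-k} = (1/a^{(k)}_0) Σ_{j=k+1}^n (a^{(j)}_{j-k-1} - a^{(j)}_{j-k}) p^{(n)}_{n-j}`. -/
noncomputable def pK (α : ℝ) (t : ℕ → ℝ) (n : ℕ) : ℕ → ℝ
  | 0 => 1 / aK α t n n
  | m + 1 =>
      (1 / aK α t (n - m - 1) (n - m - 1)) *
        ∑ i ∈ (Finset.range (m + 1)).attach,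
          (aK α t (n - i.1) (n - m) - aK α t (n - i.1) (n - m - 1)) * pK α t n i.1
  decreasing_by exact Finset.mem_range.mp i.2

lemma aK_closed (α : ℝ) (hα1 : α < 1) (t : ℕ → ℝ) (j k : ℕ) :
    aK α t j k = (1 / (t k - t (k - 1))) *
      (((t j - t (k - 1)) ^ (1 - α) - (t j - t k) ^ (1 - α)) / ((1 - α) * Real.Gamma (1 - α))) := by
  unfold aK omegaK
  have h1 : ∀ s : ℝ, (t j - s) ^ (1 - α - 1) / Real.Gamma (1 - α)
      = (Real.Gamma (1 - α))⁻¹ * (t j - s) ^ (-α) := by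
    intro s; rw [show (1 - α - 1) = -α by ring]; ring
  simp_rw [h1]
  rw [intervalIntegral.integral_const_mul,
    intervalIntegral.integral_comp_sub_left (fun u : ℝ => u ^ (-α)) (t j),
    integral_rpow (Or.inl (by linarith))]
  rw [show -α + 1 = 1 - α by ring]
  have hΓ : Real.Gamma (1 - α) ≠ 0 := ne_of_gt (Real.Gamma_pos_of_pos (by linarith))
  have ha : (1 : ℝ) - α ≠ 0 := by linarith
  field_simp

lemma aK_pos {α : ℝ} (hα0 : 0 < α) (hα1 : α < 1) (t : ℕ → ℝ) {j k : ℕ}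
    (h1 : t (k - 1) < t k) (h2 : t k ≤ t j) : 0 < aK α t j k := by
  rw [aK_closed α hα1]
  have hΓ : 0 < Real.Gamma (1 - α) := Real.Gamma_pos_of_pos (by linarith)
  have hlt : (t j - t k) ^ (1 - α) < (t j - t (k - 1)) ^ (1 - α) :=
    Real.rpow_lt_rpow (by linarith) (by linarith) (by linarith)
  have h3 : 0 < t k - t (k - 1) := by linarith
  exact mul_pos (one_div_pos.mpr h3)
    (div_pos (sub_pos.mpr hlt) (mul_pos (by linarith) hΓ))

lemma concave_slope {α x y z : ℝ} (hα0 : 0 < α) (hα1 : α < 1)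
    (hx : 0 ≤ x) (hxy : x < y) (hyz : y < z) :
    (z ^ (1 - α) - y ^ (1 - α)) * (y - x) < (y ^ (1 - α) - x ^ (1 - α)) * (z - y) := by
  have hc := Real.strictConcaveOn_rpow (p := 1 - α) (by linarith) (by linarith)
  have hxz : x < z := hxy.trans hyz
  have ha : 0 < (z - y) / (z - x) := by
    apply div_pos <;> linarith
  have hb : 0 < (y - x) / (z - x) := by
    apply div_pos <;> linarith
  have hzx : 0 < z - x := by linarith
  have hab : (z - y) / (z - x) + (y - x) / (z - x) = 1 := by
    rw [← add_div]
    rw [show z - y + (y - x) = z - x by ring]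
    exact div_self (ne_of_gt hzx)
  have := hc.2 (Set.mem_Ici.mpr hx) (Set.mem_Ici.mpr (by linarith : (0:ℝ) ≤ z))
    (by linarith : x ≠ z) ha hb hab
  simp only [smul_eq_mul] at this
  have hcomb : (z - y) / (z - x) * x + (y - x) / (z - x) * z = y := by
    rw [div_mul_eq_mul_div, div_mul_eq_mul_div, ← add_div,
      div_eq_iff (ne_of_gt hzx)]
    ring
  rw [hcomb] at this
  rw [div_mul_eq_mul_div, div_mul_eq_mul_div, ← add_div, div_lt_iff₀ hzx] at this
  nlinarith [this]

lemma aK_mono {α : ℝ} (hα0 : 0 < α) (hα1 : α < 1) (t : ℕ → ℝ) {j k : ℕ}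
    (h0 : t (k - 1) < t k) (h1 : t k < t (k + 1)) (h2 : t (k + 1) ≤ t j) :
    aK α t j k < aK α t j (k + 1) := by
  rw [aK_closed α hα1 t j k, aK_closed α hα1 t j (k + 1)]
  simp only [Nat.add_sub_cancel]
  have hΓ : 0 < Real.Gamma (1 - α) := Real.Gamma_pos_of_pos (by linarith)
  have hslope := concave_slope hα0 hα1 (x := t j - t (k + 1)) (y := t j - t k)
    (z := t j - t (k - 1)) (by linarith) (by linarith) (by linarith)
  have hc : 0 < (1 - α) * Real.Gamma (1 - α) := mul_pos (by linarith) hΓ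
  rw [one_div, one_div, inv_mul_eq_div, inv_mul_eq_div, div_div, div_div,
    div_lt_div_iff₀ (mul_pos hc (by linarith : (0:ℝ) < t k - t (k-1)))
      (mul_pos hc (by linarith : (0:ℝ) < t (k+1) - t k))]
  nlinarith [mul_lt_mul_of_pos_right hslope hc]

/-- positivity of the DCC kernels: `p^{(n)}_{n-k} > 0` for all `1 ≤ k ≤ n ≤ N`. -/
theorem DCC_kernel_positive
    (N : ℕ) (α : ℝ) (hα : 0 < α ∧ α < 1) (T : ℝ)
    (t : ℕ → ℝ) (ht0 : t 0 = 0) (htN : t N = T)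
    (htmono : ∀ k, k < N → t k < t (k + 1)) :
    ∀ n k, 1 ≤ k → k ≤ n → n ≤ N → 0 < pK α t n (n - k) := by
  obtain ⟨hα0, hα1⟩ := hα
  have tmono : ∀ j, j ≤ N → ∀ i, i < j → t i < t j := by
    intro j
    induction j with
    | zero => omega
    | succ j ih =>
      intro hjN i hij
      have h := htmono j (by omega)
      rcases Nat.lt_succ_iff_lt_or_eq.mp hij with h' | h'
      · exact (ih (by omega) i h').trans h
      · rw [h']; exact h
  have key : ∀ n, n ≤ N → ∀ m, m < n → 0 < pK α t n m := by
    intro n hnN m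
    induction m using Nat.strong_induction_on with
    | _ m ih =>
      intro hmn
      match m with
      | 0 =>
        rw [pK]
        have : 0 < aK α t n n :=
          aK_pos hα0 hα1 t (tmono n hnN (n - 1) (by omega)) le_rfl
        positivity
      | m + 1 =>
        rw [pK]
        apply mul_pos
        · have : 0 < aK α t (n - m - 1) (n - m - 1) :=
            aK_pos hα0 hα1 t (tmono (n - m - 1) (by omega) (n - m - 1 - 1) (by omega)) le_rfl
          positivity
        · apply Finset.sum_pos
          · rintro ⟨i, hi⟩ -
            have hi' : i ≤ m := by simpa using Nat.lt_succ_iff.mp (Finset.mem_range.mp hi)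
            show 0 < (aK α t (n - i) (n - m) - aK α t (n - i) (n - m - 1)) * pK α t n i
            apply mul_pos
            · have heq : n - m = (n - m - 1) + 1 := by omega
              have hjle : t (n - m - 1 + 1) ≤ t (n - i) := by
                rcases Nat.eq_or_lt_of_le (show n - m - 1 + 1 ≤ n - i by omega) with h | h
                · rw [h]
                · exact le_of_lt (tmono (n - i) (by omega) (n - m - 1 + 1) h)
              have hmono := aK_mono hα0 hα1 t (j := n - i) (k := n - m - 1)
                (tmono (n - m - 1) (by omega) (n - m - 1 - 1) (by omega))
                (tmono (n - m - 1 + 1) (by omega) (n - m - 1) (by omega))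
                hjle
              rw [sub_pos, heq]
              exact hmono
            · exact ih i (by omega) (by omega)
          · simp [Finset.attach_nonempty_iff, Finset.nonempty_range_iff]
  intro n k hk1 hkn hnN
  exact key n hnN (n - k) (by omega)
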